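/- arXiv:math/0607766 — 3 statements merged into one kernel-verified Lean document; each statement's English description precedes it below -/
import Mathlib

section
/- Every torsion-free group that contains a cyclic subgroup of finite index is itself cyclic. Precisely: if G is a group in which every non-identity element has infinite order, and H is a subgroup of G of finite index such that H is cyclic, then G is cyclic. -/
open Subgroup
open scoped commutatorElement

private lemma comm_shift {G : Type*} [Group G] {a b z w : G}
    (hz : z ∈ Subgroup.center G) (hw : w ∈ Subgroup.center G) :
    ⁅a * z, b * w⁆ = ⁅a, b⁆ := by
  have hz' := Subgroup.mem_center_iff.mp hz
  have hw' := Subgroup.mem_center_iff.mp hw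
  have hzb : Commute z b := (hz' b).symm
  have hwa : Commute w a := (hw' a).symm
  have e1 : a * z * (b * w) = a * b * (z * w) := hzb.mul_mul_mul_comm a w
  have e2 : b * w * (a * z) = b * a * (w * z) := hwa.mul_mul_mul_comm b z
  have e3 : z * w = w * z := (hz' w).symm
  rw [commutatorElement_def, commutatorElement_def]
  calc a * z * (b * w) * (a * z)⁻¹ * (b * w)⁻¹
      = (a * z) * (b * w) * ((b * w) * (a * z))⁻¹ := by group
    _ = (a * b) * (z * w) * ((b * a) * (w * z))⁻¹ := by rw [e1, e2]
    _ = (a * b) * (z * w) * ((b * a) * (z * w))⁻¹ := by rw [e3]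
    _ = a * b * a⁻¹ * b⁻¹ := by group

/-- Schur-type: a torsion-free group with finite-index center is abelian. -/
private lemma comm_of_center_findex {G : Type*} [Group G]
    (htf : ∀ g : G, g ≠ 1 → ¬ IsOfFinOrder g)
    (hfi : (Subgroup.center G).FiniteIndex) (a b : G) : a * b = b * a := by
  haveI := hfi
  haveI : Finite (G ⧸ Subgroup.center G) := by
    apply Nat.finite_of_card_ne_zero
    rw [← Subgroup.index_eq_card]
    exact hfi.index_ne_zero
  set Z := Subgroup.center G
  let F : (G ⧸ Z) × (G ⧸ Z) → G := fun p => ⁅p.1.out, p.2.out⁆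
  have hsub : commutatorSet G ⊆ Set.range F := by
    rintro _ ⟨x, y, rfl⟩
    refine ⟨(↑x, ↑y), ?_⟩
    obtain ⟨z, hz⟩ := QuotientGroup.mk_out_eq_mul Z x
    obtain ⟨w, hw⟩ := QuotientGroup.mk_out_eq_mul Z y
    show ⁅(↑x : G ⧸ Z).out, (↑y : G ⧸ Z).out⁆ = ⁅x, y⁆
    rw [hz, hw]
    exact comm_shift z.2 w.2
  have hfinset : (commutatorSet G).Finite := (Set.finite_range F).subset hsub
  haveI : Finite (commutatorSet G) := hfinset.to_subtype
  haveI : Finite (_root_.commutator G) := inferInstance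
  have hmem : ⁅a, b⁆ ∈ _root_.commutator G :=
    Subgroup.commutator_mem_commutator (Subgroup.mem_top a) (Subgroup.mem_top b)
  have hfo : IsOfFinOrder ((⟨⁅a, b⁆, hmem⟩ : _root_.commutator G)) :=
    isOfFinOrder_of_finite _
  have hfo' : IsOfFinOrder ⁅a, b⁆ := by
    have h0 : 0 < orderOf ((⟨⁅a, b⁆, hmem⟩ : _root_.commutator G)) := hfo.orderOf_pos
    rwa [orderOf_mk, orderOf_pos_iff] at h0
  have h1 : ⁅a, b⁆ = 1 := by
    by_contra h
    exact htf _ h hfo'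
  exact commutatorElement_eq_one_iff_mul_comm.mp h1

/-- A torsion-free group containing a cyclic subgroup of finite index is cyclic. -/
theorem cyclic_of_torsionFree_finiteIndex_cyclic {G : Type*} [Group G]
    (htf : ∀ g : G, g ≠ 1 → ¬ IsOfFinOrder g)
    (H : Subgroup G) (hfi : H.FiniteIndex) (hc : IsCyclic H) :
    IsCyclic G := by
  classical
  by_cases hG1 : ∀ g : G, g = 1
  · haveI : Subsingleton G := ⟨fun a b => by rw [hG1 a, hG1 b]⟩
    exact isCyclic_of_subsingleton
  push_neg at hG1
  obtain ⟨g₀, hg₀⟩ := hG1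
  haveI := hfi
  -- the normal core of H
  set N := H.normalCore with hNdef
  haveI hNnorm : N.Normal := H.normalCore_normal
  haveI hNfi : N.FiniteIndex := inferInstance
  haveI hNcyc : IsCyclic N := Subgroup.isCyclic_of_le H.normalCore_le
  obtain ⟨⟨n, hnN⟩, hngen⟩ := hNcyc.exists_generator
  have hNz : ∀ x ∈ N, ∃ j : ℤ, n ^ j = x := by
    intro x hx
    obtain ⟨j, hj⟩ := Subgroup.mem_zpowers_iff.mp (hngen ⟨x, hx⟩)
    exact ⟨j, by simpa [SubgroupClass.coe_zpow] using congrArg Subtype.val hj⟩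
  -- n is nontrivial of infinite order
  have hn1 : n ≠ 1 := by
    rintro rfl
    have hbot : N ≤ ⊥ := by
      intro x hx
      obtain ⟨j, hj⟩ := hNz x hx
      simp only [one_zpow] at hj
      exact Subgroup.mem_bot.mpr hj.symm
    have hfinG : Finite G := by
      apply Nat.finite_of_card_ne_zero
      have h1 : N.index ≠ 0 := hNfi.index_ne_zero
      have h2 : N.index ∣ (⊥ : Subgroup G).index := Subgroup.index_dvd_of_le bot_le
      have h3 : (⊥ : Subgroup G).index = Nat.card G := Subgroup.index_bot
      have h4 : N = ⊥ := le_antisymm hbot bot_le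
      rw [← h3, ← h4]
      exact h1
    exact htf g₀ hg₀ (isOfFinOrder_of_finite g₀)
  have hninf : ¬ IsOfFinOrder n := htf n hn1
  have hzinj : Function.Injective (n ^ · : ℤ → G) :=
    injective_zpow_iff_not_isOfFinOrder.mpr hninf
  -- the centralizer of n
  set C := Subgroup.centralizer (Subgroup.zpowers n : Set G) with hCdef
  have hmemC : ∀ g : G, n * g = g * n → g ∈ C := by
    intro g hg
    rw [hCdef, Subgroup.mem_centralizer_iff]
    intro h hh
    obtain ⟨j, rfl⟩ := Subgroup.mem_zpowers_iff.mp hh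
    have hcng : Commute n g := hg
    exact hcng.zpow_left j
  have hCcomm : ∀ g ∈ C, n * g = g * n := by
    intro g hg
    exact Subgroup.mem_centralizer_iff.mp hg n (Subgroup.mem_zpowers n)
  have hnC : n ∈ C := hmemC n rfl
  have hNC : N ≤ C := by
    intro x hx
    obtain ⟨j, rfl⟩ := hNz x hx
    exact Subgroup.zpowers_le.mpr hnC (Subgroup.zpow_mem_zpowers n j)
  -- conjugation sends n to n or n⁻¹
  have hconjN : ∀ g : G, g * n * g⁻¹ = n ∨ g * n * g⁻¹ = n⁻¹ := by
    intro g
    obtain ⟨k, hk⟩ := hNz _ (hNnorm.conj_mem n hnN g)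
    obtain ⟨m, hm⟩ := hNz _ (by simpa using hNnorm.conj_mem n hnN g⁻¹)
    have key : n ^ (m * k) = n ^ (1 : ℤ) := by
      rw [zpow_one]
      calc n ^ (m * k) = (n ^ m) ^ k := by rw [zpow_mul]
        _ = (g⁻¹ * n * g) ^ k := by rw [hm]
        _ = (g⁻¹ * n * (g⁻¹)⁻¹) ^ k := by rw [inv_inv]
        _ = g⁻¹ * n ^ k * (g⁻¹)⁻¹ := conj_zpow
        _ = g⁻¹ * (g * n * g⁻¹) * g := by rw [hk, inv_inv]
        _ = n := by group
    have hmk : m * k = 1 := hzinj key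
    rcases Int.isUnit_iff.mp (IsUnit.of_mul_eq_one (a := k) m (by rw [mul_comm]; exact hmk)) with h | h
    · left; rw [← hk, h, zpow_one]
    · right; rw [← hk, h, zpow_neg, zpow_one]
  have hninv : n⁻¹ ≠ n := by
    intro h
    apply hninf
    apply isOfFinOrder_iff_pow_eq_one.mpr
    refine ⟨2, by norm_num, ?_⟩
    rw [pow_two]
    nth_rewrite 1 [← h]
    exact inv_mul_cancel n
  -- C has finite index: the quotient embeds in Bool
  have key2 : ∀ a b : G, a * n * a⁻¹ = b * n * b⁻¹ → a⁻¹ * b ∈ C := by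
    intro a b h
    apply hmemC
    calc n * (a⁻¹ * b) = a⁻¹ * (a * n * a⁻¹) * b := by group
      _ = a⁻¹ * (b * n * b⁻¹) * b := by rw [h]
      _ = (a⁻¹ * b) * n := by group
  have keywd : ∀ a b : G, a⁻¹ * b ∈ C → a * n * a⁻¹ = b * n * b⁻¹ := by
    intro a b hab
    have hcomm : (a⁻¹ * b) * n = n * (a⁻¹ * b) := (hCcomm _ hab).symm
    calc a * n * a⁻¹ = b * ((a⁻¹ * b)⁻¹ * n * (a⁻¹ * b)) * b⁻¹ := by group
      _ = b * ((a⁻¹ * b)⁻¹ * ((a⁻¹ * b) * n)) * b⁻¹ := by rw [hcomm]; group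
      _ = b * n * b⁻¹ := by group
  let q : G ⧸ C → Bool := Quotient.lift (fun g => decide (g * n * g⁻¹ = n))
    (by
      intro a b hab
      have h := keywd a b (QuotientGroup.leftRel_apply.mp hab)
      simp [h])
  have hqinj : Function.Injective q := by
    intro x y
    refine Quotient.inductionOn₂ x y ?_
    intro a b h
    have h' : decide (a * n * a⁻¹ = n) = decide (b * n * b⁻¹ = n) := h
    have heq : a * n * a⁻¹ = b * n * b⁻¹ := by
      rcases hconjN a with h1 | h1 <;> rcases hconjN b with h2 | h2
      · rw [h1, h2]
      · rw [h1, h2] at h'; simp [hninv] at h'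
      · rw [h1, h2] at h'; simp [hninv] at h'
      · rw [h1, h2]
    exact Quotient.sound (QuotientGroup.leftRel_apply.mpr (key2 a b heq))
  haveI : Finite (G ⧸ C) := Finite.of_injective q hqinj
  haveI hCfi : C.FiniteIndex := Subgroup.finiteIndex_of_finite_quotient (H := C)
  -- the subgroup N inside C
  set K := N.subgroupOf C with hKdef
  haveI hKnorm : K.Normal := hNnorm.subgroupOf C
  have hkne : K.index ≠ 0 := by
    have hrel : N.relIndex C * C.index = N.index := Subgroup.relIndex_mul_index hNC
    intro h0
    exact hNfi.index_ne_zero (by rw [← hrel]; rw [Subgroup.relIndex] at *; rw [← hKdef, h0, zero_mul])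
  set k := K.index with hkdef
  -- C is torsion-free
  have htfC : ∀ x : ↥C, x ≠ 1 → ¬ IsOfFinOrder x := by
    intro x hx hfo
    have hxG : (x : G) ≠ 1 := fun h => hx (Subtype.ext h)
    apply htf (x : G) hxG
    rw [← orderOf_pos_iff, Subgroup.orderOf_coe]
    exact hfo.orderOf_pos
  -- the center of C has finite index (contains K)
  have hKcenter : K ≤ Subgroup.center ↥C := by
    intro x hx
    rw [Subgroup.mem_center_iff]
    intro y
    apply Subtype.ext
    have hxN : (x : G) ∈ N := hx
    obtain ⟨j, hj⟩ := hNz _ hxN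
    have hyC : (y : G) ∈ C := y.2
    have hcny : Commute n (y : G) := hCcomm _ hyC
    have : n ^ j * (y : G) = (y : G) * n ^ j := hcny.zpow_left j
    rw [hj] at this
    simpa using this.symm
  haveI : K.FiniteIndex := ⟨hkne⟩
  haveI hZCfi : (Subgroup.center ↥C).FiniteIndex := Subgroup.finiteIndex_of_le hKcenter
  have hcommC : ∀ a b : ↥C, a * b = b * a := comm_of_center_findex htfC hZCfi
  -- the k-th power map embeds C into N
  have hxkN : ∀ x : ↥C, (x : G) ^ k ∈ N := by
    intro x
    have h1 : x ^ k ∈ K := K.pow_index_mem x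
    have h2 : ((x ^ k : ↥C) : G) ∈ N := h1
    simpa using h2
  let f : ↥C →* ↥N := MonoidHom.mk' (fun x => ⟨(x : G) ^ k, hxkN x⟩) (by
    intro a b
    apply Subtype.ext
    show ((a * b : ↥C) : G) ^ k = (a : G) ^ k * (b : G) ^ k
    have hab : Commute (a : G) (b : G) := by
      have := congrArg Subtype.val (hcommC a b)
      exact this
    rw [Subgroup.coe_mul, hab.mul_pow])
  have hfinj : Function.Injective f := by
    rw [injective_iff_map_eq_one]
    intro x hx
    have h1 : (x : G) ^ k = 1 := congrArg Subtype.val hx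
    by_contra hxne
    have hxG : (x : G) ≠ 1 := fun h => hxne (Subtype.ext h)
    exact htf _ hxG (isOfFinOrder_iff_pow_eq_one.mpr ⟨k, Nat.pos_of_ne_zero hkne, h1⟩)
  haveI hCcyc : IsCyclic ↥C :=
    isCyclic_of_surjective (MonoidHom.ofInjective hfinj).symm (MulEquiv.surjective _)
  -- a generator of C
  obtain ⟨cc, hccgen⟩ := hCcyc.exists_generator
  set c := (cc : G) with hcdef
  have hCc : ∀ x ∈ C, ∃ j : ℤ, c ^ j = x := by
    intro x hx
    obtain ⟨j, hj⟩ := Subgroup.mem_zpowers_iff.mp (hccgen ⟨x, hx⟩)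
    exact ⟨j, by simpa [SubgroupClass.coe_zpow] using congrArg Subtype.val hj⟩
  obtain ⟨m, hm⟩ := hCc n hnC
  have hc1 : c ≠ 1 := fun h => hn1 (by rw [← hm, h, one_zpow])
  have hcinf : ¬ IsOfFinOrder c := htf c hc1
  have hczinj : Function.Injective (c ^ · : ℤ → G) :=
    injective_zpow_iff_not_isOfFinOrder.mpr hcinf
  -- C is normal in G
  have hCnormal : ∀ g : G, ∀ h ∈ C, g * h * g⁻¹ ∈ C := by
    intro g h hh
    apply hmemC
    have h2 : g⁻¹ * n * g ∈ N := by simpa using hNnorm.conj_mem n hnN g⁻¹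
    obtain ⟨j, hj⟩ := hNz _ h2
    have hcnh : Commute n h := hCcomm _ hh
    have h3 : (g⁻¹ * n * g) * h = h * (g⁻¹ * n * g) := by
      rw [← hj]
      exact hcnh.zpow_left j
    calc n * (g * h * g⁻¹) = g * ((g⁻¹ * n * g) * h) * g⁻¹ := by group
      _ = g * (h * (g⁻¹ * n * g)) * g⁻¹ := by rw [h3]
      _ = (g * h * g⁻¹) * n := by group
  -- every element of G commutes with c
  have hfinal : ∀ g : G, g * c * g⁻¹ = c := by
    intro g
    obtain ⟨i, hi⟩ := hCc _ (hCnormal g c cc.2)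
    obtain ⟨j, hj⟩ := hCc _ (by simpa using hCnormal g⁻¹ c cc.2)
    have key : c ^ (j * i) = c ^ (1 : ℤ) := by
      rw [zpow_one]
      calc c ^ (j * i) = (c ^ j) ^ i := by rw [zpow_mul]
        _ = (g⁻¹ * c * g) ^ i := by rw [hj]
        _ = (g⁻¹ * c * (g⁻¹)⁻¹) ^ i := by rw [inv_inv]
        _ = g⁻¹ * c ^ i * (g⁻¹)⁻¹ := conj_zpow
        _ = g⁻¹ * (g * c * g⁻¹) * g := by rw [hi, inv_inv]
        _ = c := by group
    have hji : j * i = 1 := hczinj key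
    rcases Int.isUnit_iff.mp (IsUnit.of_mul_eq_one (a := i) j (by rw [mul_comm]; exact hji)) with h | h
    · rw [← hi, h, zpow_one]
    · exfalso
      rw [h] at hi
      have hgc : g * c * g⁻¹ = c⁻¹ := by rw [← hi, zpow_neg, zpow_one]
      rcases eq_or_ne g 1 with rfl | hgne
      · apply hcinf
        apply isOfFinOrder_iff_pow_eq_one.mpr
        refine ⟨2, by norm_num, ?_⟩
        have : c = c⁻¹ := by simpa using hgc
        rw [pow_two]
        nth_rewrite 2 [this]
        rw [mul_inv_cancel]
      · -- g² commutes with c hence lies in C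
        have hg2conj : g * g * c * (g * g)⁻¹ = c := by
          have hinv : g * c⁻¹ * g⁻¹ = c := by
            calc g * c⁻¹ * g⁻¹ = (g * c * g⁻¹)⁻¹ := by group
              _ = (c⁻¹)⁻¹ := by rw [hgc]
              _ = c := inv_inv c
          calc g * g * c * (g * g)⁻¹ = g * (g * c * g⁻¹) * g⁻¹ := by group
            _ = g * c⁻¹ * g⁻¹ := by rw [hgc]
            _ = c := hinv
        have hcg : Commute c (g * g) := by
          show c * (g * g) = (g * g) * c
          conv_lhs => rw [← hg2conj]
          group
        have hg2C : g * g ∈ C := by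
          apply hmemC
          have h4 : c ^ m * (g * g) = (g * g) * c ^ m := hcg.zpow_left m
          rw [hm] at h4
          exact h4
        obtain ⟨s, hs⟩ := hCc _ hg2C
        have hs0 : s = 0 := by
          have e1 : g * c ^ s * g⁻¹ = c ^ (-s) := by
            calc g * c ^ s * g⁻¹ = (g * c * g⁻¹) ^ s := conj_zpow.symm
              _ = (c⁻¹) ^ s := by rw [hgc]
              _ = c ^ (-s) := by rw [inv_zpow, ← zpow_neg]
          have e2 : g * c ^ s * g⁻¹ = c ^ s := by rw [hs]; group
          have := hczinj (e1.symm.trans e2)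
          omega
        have hg2one : g * g = 1 := by rw [← hs, hs0, zpow_zero]
        exact htf g hgne (isOfFinOrder_iff_pow_eq_one.mpr ⟨2, by norm_num, by rw [pow_two]; exact hg2one⟩)
  -- conclusion
  refine ⟨c, fun x => ?_⟩
  have hx := hfinal x
  have hxc : c * x = x * c := by
    conv_lhs => rw [← hx]
    group
  have hxC : x ∈ C := by
    apply hmemC
    have hcx : Commute c x := hxc
    have h2 : Commute (c ^ m) x := hcx.zpow_left m
    rw [← hm]
    exact h2
  obtain ⟨j, hj⟩ := hCc x hxC
  exact Subgroup.mem_zpowers_iff.mpr ⟨j, hj⟩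
end

section
/- Let E be a group, let t be a central element of E, let Z be the (necessarily normal) subgroup of E generated by t, and let Q = E/Z. Assume that Q is torsion-free and that every abelian subgroup of Q is cyclic. Then for every non-abelian subgroup G of E, every finite-index subgroup of G is non-abelian. -/
private lemma tf_zpow_eq_zero {P : Type*} [Group P]
    (htf : ∀ p : P, p ≠ 1 → ¬ IsOfFinOrder p)
    {p : P} (hp : p ≠ 1) {k : ℤ} (h : p ^ k = 1) : k = 0 := by
  by_contra hk
  apply htf p hp
  refine isOfFinOrder_iff_pow_eq_one.mpr ⟨k.natAbs, Int.natAbs_pos.mpr hk, ?_⟩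
  rcases Int.natAbs_eq k with he | he
  · rw [← zpow_natCast, ← he, h]
  · rw [he, zpow_neg, inv_eq_one] at h
    rw [← zpow_natCast, h]

private lemma conj_sign {P : Type*} [Group P]
    (htf : ∀ p : P, p ≠ 1 → ¬ IsOfFinOrder p)
    {q s : P} (hq : q ≠ 1) (h1 : ∃ a : ℤ, s * q * s⁻¹ = q ^ a)
    (h2 : ∃ b : ℤ, s⁻¹ * q * s = q ^ b) :
    s * q * s⁻¹ = q ∨ s * q * s⁻¹ = q⁻¹ := by
  obtain ⟨a, ha⟩ := h1
  obtain ⟨b, hb⟩ := h2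
  have c1 : (s⁻¹ * q * s) ^ a = s⁻¹ * q ^ a * s := by
    have := conj_zpow (i := a) (a := s⁻¹) (b := q)
    simpa [inv_inv] using this
  have h4 : q = q ^ (b * a) := by
    calc q = s⁻¹ * (s * q * s⁻¹) * s := by group
    _ = s⁻¹ * q ^ a * s := by rw [ha]
    _ = (s⁻¹ * q * s) ^ a := c1.symm
    _ = (q ^ b) ^ a := by rw [hb]
    _ = q ^ (b * a) := by rw [← zpow_mul]
  have key : q ^ (b * a - 1) = 1 := by
    rw [zpow_sub, ← h4, zpow_one]
    simp
  have hba : b * a = 1 := by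
    have := tf_zpow_eq_zero htf hq key
    omega
  rcases (Int.mul_eq_one_iff_eq_one_or_neg_one.mp hba) with ⟨hb1, ha1⟩ | ⟨hb1, ha1⟩
  · left; rw [ha, ha1, zpow_one]
  · right; rw [ha, ha1]
    simp

private lemma lemA {P : Type*} [Group P]
    (htf : ∀ p : P, p ≠ 1 → ¬ IsOfFinOrder p)
    (hcyc : ∀ A : Subgroup P, (∀ x y : A, x * y = y * x) → IsCyclic A)
    (M : Subgroup P) (hMn : M.Normal) (hMf : M.FiniteIndex)
    (hMab : ∀ x y : M, x * y = y * x) :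
    ∀ x y : P, x * y = y * x := by
  haveI := hMn
  haveI := hMf
  obtain ⟨m, hm⟩ := (hcyc M hMab).exists_generator
  set q₀ : P := (m : P) with hq₀def
  have hMz : ∀ z : P, z ∈ M ↔ ∃ k : ℤ, q₀ ^ k = z := by
    intro z
    constructor
    · intro hz
      obtain ⟨k, hk⟩ := Subgroup.mem_zpowers_iff.mp (hm ⟨z, hz⟩)
      exact ⟨k, by simpa [Subtype.ext_iff] using hk⟩
    · rintro ⟨k, rfl⟩
      exact Subgroup.zpow_mem M m.2 k
  by_cases hq1 : q₀ = 1
  · -- M is trivial, so P is finite, so P is trivial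
    have hbot : (⊥ : Subgroup P).index ≠ 0 := by
      have hMbot : M = ⊥ := by
        ext z
        simp only [hMz z, hq1, one_zpow, Subgroup.mem_bot]
        exact ⟨fun ⟨k, hk⟩ => hk.symm, fun h => ⟨0, h.symm⟩⟩
      rw [← hMbot]
      exact hMf.index_ne_zero
    rw [Subgroup.index_bot] at hbot
    haveI : Finite P := (Nat.card_ne_zero.mp hbot).2
    intro x y
    have hx : x = 1 := by
      by_contra h
      exact htf x h (isOfFinOrder_of_finite x)
    have hy : y = 1 := by
      by_contra h
      exact htf y h (isOfFinOrder_of_finite y)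
    rw [hx, hy]
  · -- q₀ ≠ 1
    set Pc := Subgroup.centralizer ({q₀} : Set P) with hPcdef
    have hmemPc : ∀ z : P, z ∈ Pc ↔ q₀ * z = z * q₀ := by
      intro z
      rw [hPcdef, Subgroup.mem_centralizer_iff]
      simp
    have hMPc : M ≤ Pc := by
      intro z hz
      obtain ⟨k, hk⟩ := (hMz z).mp hz
      rw [hmemPc, ← hk]
      exact ((Commute.refl q₀).zpow_right k).eq
    haveI hPcFI : Pc.FiniteIndex := Subgroup.finiteIndex_of_le hMPc
    have hq₀Pc : q₀ ∈ Pc := (hmemPc q₀).mpr rfl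
    set q₀c : Pc := ⟨q₀, hq₀Pc⟩ with hq₀cdef
    -- the cyclic subgroup generated by q₀ is central in Pc and of finite index
    have hzc : Subgroup.zpowers q₀c ≤ Subgroup.center Pc := by
      intro z hz
      obtain ⟨k, hk⟩ := Subgroup.mem_zpowers_iff.mp hz
      rw [Subgroup.mem_center_iff]
      intro g
      rw [← hk]
      have hg : q₀ * (g : P) = (g : P) * q₀ := (hmemPc (g : P)).mp g.2
      have hc : Commute ((g : P)) q₀ := hg.symm
      have : (g : P) * q₀ ^ k = q₀ ^ k * (g : P) := (hc.zpow_right k).eq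
      ext
      push_cast
      exact this
    have hsub : Subgroup.zpowers q₀c = M.subgroupOf Pc := by
      ext z
      rw [Subgroup.mem_subgroupOf, hMz, Subgroup.mem_zpowers_iff]
      constructor
      · rintro ⟨k, hk⟩
        exact ⟨k, by rw [← hk]; push_cast; rfl⟩
      · rintro ⟨k, hk⟩
        exact ⟨k, Subtype.ext (by push_cast; exact hk)⟩
    haveI hfi1 : (M.subgroupOf Pc).FiniteIndex := by
      have hdvd : (M.subgroupOf Pc).index ∣ M.index :=
        Subgroup.relIndex_dvd_index_of_le hMPc
      exact ⟨fun h0 => hMf.index_ne_zero (zero_dvd_iff.mp (h0 ▸ hdvd))⟩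
    haveI : (Subgroup.zpowers q₀c).FiniteIndex := by rw [hsub]; exact hfi1
    haveI : (Subgroup.center Pc).FiniteIndex := Subgroup.finiteIndex_of_le hzc
    -- transfer: Pc is abelian
    have hPctf : ∀ z : Pc, z ≠ 1 → ¬ IsOfFinOrder z := by
      intro z hz hfin
      refine htf (z : P) (fun h => hz (Subtype.ext h)) ?_
      exact Pc.subtype.isOfFinOrder hfin
    have hPcab : ∀ x y : Pc, x * y = y * x := by
      have hinj : Function.Injective (MonoidHom.transferCenterPow Pc) := by
        intro x y hxy
        have h1 : MonoidHom.transferCenterPow Pc (x * y⁻¹) = 1 := by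
          rw [map_mul, map_inv, hxy, mul_inv_cancel]
        have h2 : (x * y⁻¹) ^ (Subgroup.center Pc).index = 1 := by
          have := congrArg (Subtype.val) h1
          rw [MonoidHom.transferCenterPow_apply] at this
          simpa using this
        have hxy1 : x * y⁻¹ = 1 := by
          by_contra h
          refine hPctf _ h (isOfFinOrder_iff_pow_eq_one.mpr ?_)
          exact ⟨(Subgroup.center Pc).index,
            Nat.pos_of_ne_zero Subgroup.FiniteIndex.index_ne_zero, h2⟩
        rw [← mul_inv_cancel y] at hxy1
        exact mul_right_cancel hxy1
      intro x y
      apply hinj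
      rw [map_mul, map_mul]
      exact Subtype.ext (Subgroup.mem_center_iff.mp ((MonoidHom.transferCenterPow Pc) y).2 _)
    obtain ⟨p₁, hp₁⟩ := (hcyc Pc hPcab).exists_generator
    set π₁ : P := (p₁ : P) with hπ₁def
    have hPcz : ∀ z : P, z ∈ Pc ↔ ∃ k : ℤ, π₁ ^ k = z := by
      intro z
      constructor
      · intro hz
        obtain ⟨k, hk⟩ := Subgroup.mem_zpowers_iff.mp (hp₁ ⟨z, hz⟩)
        exact ⟨k, by simpa [Subtype.ext_iff] using hk⟩
      · rintro ⟨k, rfl⟩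
        exact Subgroup.zpow_mem Pc p₁.2 k
    obtain ⟨r, hr⟩ := (hPcz q₀).mp hq₀Pc
    have hπ₁1 : π₁ ≠ 1 := by
      intro h
      rw [h, one_zpow] at hr
      exact hq1 hr.symm
    -- key claim: every element of P centralizes q₀
    have hall : ∀ s : P, s ∈ Pc := by
      intro s
      by_contra hs
      have hsq : ¬ q₀ * s = s * q₀ := fun h => hs ((hmemPc s).mpr h)
      have hqM : q₀ ∈ M := m.2
      have h1 : ∃ a : ℤ, s * q₀ * s⁻¹ = q₀ ^ a := by
        obtain ⟨a, hha⟩ := (hMz _).mp (hMn.conj_mem q₀ hqM s)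
        exact ⟨a, hha.symm⟩
      have h2 : ∃ b : ℤ, s⁻¹ * q₀ * s = q₀ ^ b := by
        have := hMn.conj_mem q₀ hqM s⁻¹
        rw [inv_inv] at this
        obtain ⟨b, hhb⟩ := (hMz _).mp this
        exact ⟨b, hhb.symm⟩
      rcases conj_sign htf hq1 h1 h2 with h | h
      · apply hsq
        conv_lhs => rw [← h]
        group
      -- h : s * q₀ * s⁻¹ = q₀⁻¹
      have hinv : s⁻¹ * q₀ * s = q₀⁻¹ := by
        calc s⁻¹ * q₀ * s = (s⁻¹ * q₀⁻¹ * s)⁻¹ := by group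
        _ = (s⁻¹ * (s * q₀ * s⁻¹) * s)⁻¹ := by rw [h]
        _ = q₀⁻¹ := by group
      have hinv2 : s * q₀⁻¹ * s⁻¹ = q₀ := by
        calc s * q₀⁻¹ * s⁻¹ = (s * q₀ * s⁻¹)⁻¹ := by group
        _ = q₀ := by rw [h, inv_inv]
      have hinv2' : s⁻¹ * q₀⁻¹ * s = q₀ := by
        calc s⁻¹ * q₀⁻¹ * s = (s⁻¹ * q₀ * s)⁻¹ := by group
        _ = q₀ := by rw [hinv, inv_inv]
      -- conjugation by s and s⁻¹ preserves Pc
      have hcp : ∀ z : P, z ∈ Pc → s * z * s⁻¹ ∈ Pc := by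
        intro z hz
        have hzq : q₀ * z = z * q₀ := (hmemPc z).mp hz
        have hcz : Commute q₀ z := hzq
        have hzq' : q₀⁻¹ * z = z * q₀⁻¹ := hcz.inv_left.eq
        rw [hmemPc, ← hinv2]
        calc s * q₀⁻¹ * s⁻¹ * (s * z * s⁻¹) = s * (q₀⁻¹ * z) * s⁻¹ := by group
        _ = s * (z * q₀⁻¹) * s⁻¹ := by rw [hzq']
        _ = s * z * s⁻¹ * (s * q₀⁻¹ * s⁻¹) := by group
      have hcm : ∀ z : P, z ∈ Pc → s⁻¹ * z * s ∈ Pc := by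
        intro z hz
        have hzq : q₀ * z = z * q₀ := (hmemPc z).mp hz
        have hcz : Commute q₀ z := hzq
        have hzq' : q₀⁻¹ * z = z * q₀⁻¹ := hcz.inv_left.eq
        rw [hmemPc, ← hinv2']
        calc s⁻¹ * q₀⁻¹ * s * (s⁻¹ * z * s) = s⁻¹ * (q₀⁻¹ * z) * s := by group
        _ = s⁻¹ * (z * q₀⁻¹) * s := by rw [hzq']
        _ = s⁻¹ * z * s * (s⁻¹ * q₀⁻¹ * s) := by group
      have hπPc : π₁ ∈ Pc := p₁.2
      have ha : ∃ a : ℤ, s * π₁ * s⁻¹ = π₁ ^ a := by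
        obtain ⟨a, hha⟩ := (hPcz _).mp (hcp π₁ hπPc)
        exact ⟨a, hha.symm⟩
      have hb : ∃ b : ℤ, s⁻¹ * π₁ * s = π₁ ^ b := by
        obtain ⟨b, hhb⟩ := (hPcz _).mp (hcm π₁ hπPc)
        exact ⟨b, hhb.symm⟩
      rcases conj_sign htf hπ₁1 ha hb with h' | h'
      · -- s commutes with π₁, hence with q₀ : contradiction with h
        have hfixq : s * q₀ * s⁻¹ = q₀ := by
          rw [← hr]
          calc s * π₁ ^ r * s⁻¹ = (s * π₁ * s⁻¹) ^ r := conj_zpow.symm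
          _ = π₁ ^ r := by rw [h']
        have hqq : q₀⁻¹ = q₀ := by rw [← h, hfixq]
        have h2 : q₀ ^ (2 : ℤ) = 1 := by
          have : q₀ * q₀ = 1 := by
            nth_rewrite 1 [← hqq]
            simp
          rw [show (2 : ℤ) = 1 + 1 by norm_num, zpow_add, zpow_one, this]
        exact hq1 (by simpa using tf_zpow_eq_zero htf hq1 h2)
      · -- h' : s * π₁ * s⁻¹ = π₁⁻¹
        have hs2 : s ^ 2 ∈ Pc := by
          rw [hmemPc]
          have hstep : s * q₀⁻¹ * s⁻¹ = q₀ := hinv2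
          have hconj2 : s ^ 2 * q₀ * (s ^ 2)⁻¹ = q₀ := by
            rw [pow_two]
            calc s * s * q₀ * (s * s)⁻¹ = s * (s * q₀ * s⁻¹) * s⁻¹ := by group
            _ = s * q₀⁻¹ * s⁻¹ := by rw [h]
            _ = q₀ := hinv2
          calc q₀ * s ^ 2 = s ^ 2 * q₀ * (s ^ 2)⁻¹ * s ^ 2 := by rw [hconj2]
          _ = s ^ 2 * q₀ := by group
        obtain ⟨k, hk⟩ := (hPcz _).mp hs2
        have hfix : s * s ^ 2 * s⁻¹ = s ^ 2 := by group
        have hneg : π₁ ^ (-k) = π₁ ^ k := by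
          calc π₁ ^ (-k) = (π₁⁻¹) ^ k := by rw [zpow_neg, ← inv_zpow]
          _ = (s * π₁ * s⁻¹) ^ k := by rw [h']
          _ = s * π₁ ^ k * s⁻¹ := conj_zpow
          _ = s * s ^ 2 * s⁻¹ := by rw [hk]
          _ = s ^ 2 := hfix
          _ = π₁ ^ k := hk.symm
        have h2k : π₁ ^ (2 * k) = 1 := by
          rw [two_mul, zpow_add]
          nth_rewrite 1 [← hneg]
          rw [← zpow_add]
          simp
        have hk0 : k = 0 := by
          have := tf_zpow_eq_zero htf hπ₁1 h2k
          omega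
        rw [hk0] at hk
        have hs1 : s ≠ 1 := fun h1 => hsq (by rw [h1]; group)
        refine htf s hs1 (isOfFinOrder_iff_pow_eq_one.mpr ⟨2, by norm_num, ?_⟩)
        rw [← hk]
        norm_num
    intro x y
    have := hPcab ⟨x, hall x⟩ ⟨y, hall y⟩
    simpa [Subtype.ext_iff] using this

/-- Group-theoretic core of Lemma 3.3(i): let `E` be a group, `t` a central element,
`Z = ⟨t⟩` (normal since `t` is central) and `Q = E / Z`. If `Q` is torsion-free and
every abelian subgroup of `Q` is cyclic, then every finite-index subgroup of a
non-abelian subgroup of `E` is non-abelian. -/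
theorem finiteIndex_subgroup_nonabelian {E : Type*} [Group E]
    (t : E) (ht : t ∈ Subgroup.center E)
    (hZ : (Subgroup.zpowers t).Normal)
    (hQtf : ∀ q : E ⧸ Subgroup.zpowers t, q ≠ 1 → ¬ IsOfFinOrder q)
    (hQab : ∀ A : Subgroup (E ⧸ Subgroup.zpowers t),
      (∀ x y : A, x * y = y * x) → IsCyclic A)
    (G : Subgroup E) (hG : ¬ ∀ x y : G, x * y = y * x)
    (K : Subgroup G) (hK : K.FiniteIndex) :
    ¬ ∀ x y : K, x * y = y * x := by
  intro hKab
  haveI := hZ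
  haveI := hK
  set π : E →* E ⧸ Subgroup.zpowers t := QuotientGroup.mk' (Subgroup.zpowers t) with hπdef
  set φ : ↥G →* E ⧸ Subgroup.zpowers t := π.comp G.subtype with hφdef
  -- the image of G is torsion-free
  have htf : ∀ p : ↥φ.range, p ≠ 1 → ¬ IsOfFinOrder p := by
    intro p hp hfin
    exact hQtf (p : E ⧸ Subgroup.zpowers t) (fun h => hp (Subtype.ext h))
      (φ.range.subtype.isOfFinOrder hfin)
  -- every abelian subgroup of the image of G is cyclic
  have hcyc : ∀ A : Subgroup ↥φ.range, (∀ x y : A, x * y = y * x) → IsCyclic A := by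
    intro A hA
    have hA' : ∀ x y : ↥(A.map φ.range.subtype), x * y = y * x := by
      rintro ⟨x, hx⟩ ⟨y, hy⟩
      obtain ⟨a, ha, rfl⟩ := hx
      obtain ⟨b, hb, rfl⟩ := hy
      have h2 : a * b = b * a := congrArg Subtype.val (hA ⟨a, ha⟩ ⟨b, hb⟩)
      ext
      have h3 := congrArg (fun z : ↥φ.range => (z : E ⧸ Subgroup.zpowers t)) h2
      simpa using h3
    have hcy := hQab (A.map φ.range.subtype) hA'
    exact isCyclic_of_surjective
      (A.equivMapOfInjective φ.range.subtype φ.range.subtype_injective).symm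
      (MulEquiv.surjective _)
  -- the image of the normal core of K is abelian, normal, of finite index
  set N : Subgroup ↥G := K.normalCore with hNdef
  set M : Subgroup ↥φ.range := N.map φ.rangeRestrict with hMdef
  have hMn : M.Normal :=
    Subgroup.Normal.map (Subgroup.normalCore_normal K) φ.rangeRestrict
      φ.rangeRestrict_surjective
  have hMf : M.FiniteIndex := by
    haveI : N.FiniteIndex := Subgroup.finiteIndex_normalCore K
    have hdvd : M.index ∣ N.index :=
      Subgroup.index_map_dvd N φ.rangeRestrict_surjective
    exact ⟨fun h0 => Subgroup.FiniteIndex.index_ne_zero (H := N) (zero_dvd_iff.mp (h0 ▸ hdvd))⟩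
  have hMab : ∀ x y : M, x * y = y * x := by
    rintro ⟨x, hx⟩ ⟨y, hy⟩
    obtain ⟨a, ha, rfl⟩ := hx
    obtain ⟨b, hb, rfl⟩ := hy
    have h2 : a * b = b * a := by
      have := hKab ⟨a, K.normalCore_le ha⟩ ⟨b, K.normalCore_le hb⟩
      exact congrArg Subtype.val this
    refine Subtype.ext ?_
    show φ.rangeRestrict a * φ.rangeRestrict b = φ.rangeRestrict b * φ.rangeRestrict a
    rw [← map_mul, ← map_mul, h2]
  -- hence the image of G is abelian, hence cyclic
  have hPab : ∀ x y : ↥φ.range, x * y = y * x := lemA htf hcyc M hMn hMf hMab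
  obtain ⟨p, hp⟩ := (hQab φ.range hPab).exists_generator
  obtain ⟨x₀, hx₀⟩ : ∃ x₀ : ↥G, φ x₀ = (p : E ⧸ Subgroup.zpowers t) :=
    MonoidHom.mem_range.mp p.2
  -- decompose every element of G as t ^ a * x₀ ^ i
  have hdec : ∀ x : ↥G, ∃ (i a : ℤ), (x : E) = t ^ a * (x₀ : E) ^ i := by
    intro x
    obtain ⟨i, hi⟩ := Subgroup.mem_zpowers_iff.mp (hp ⟨φ x, ⟨x, rfl⟩⟩)
    have hi' : φ (x₀ ^ i) = φ x := by
      rw [map_zpow, hx₀]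
      have := congrArg Subtype.val hi
      push_cast at this
      exact this
    have hker : ((x * (x₀ ^ i)⁻¹ : ↥G) : E) ∈ Subgroup.zpowers t := by
      have h1 : φ (x * (x₀ ^ i)⁻¹) = 1 := by
        rw [map_mul, map_inv, hi', mul_inv_cancel]
      rw [← QuotientGroup.ker_mk' (Subgroup.zpowers t)]
      exact h1
    obtain ⟨a, haa⟩ := Subgroup.mem_zpowers_iff.mp hker
    refine ⟨i, a, ?_⟩
    have : t ^ a = (x : E) * ((x₀ : E) ^ i)⁻¹ := by
      rw [haa]
      push_cast
      rfl
    rw [this]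
    group
  refine hG ?_
  intro x y
  obtain ⟨i, a, hx⟩ := hdec x
  obtain ⟨j, b, hy⟩ := hdec y
  have ht' : ∀ (c : ℤ) (g : E), t ^ c * g = g * t ^ c := by
    intro c g
    have hmem : t ^ c ∈ Subgroup.center E := Subgroup.zpow_mem _ ht c
    exact (Subgroup.mem_center_iff.mp hmem g).symm
  have swap : ∀ (c d u v : ℤ),
      t ^ c * (x₀ : E) ^ u * (t ^ d * (x₀ : E) ^ v) = t ^ (c + d) * (x₀ : E) ^ (u + v) := by
    intro c d u v
    rw [zpow_add, zpow_add]
    calc t ^ c * (x₀ : E) ^ u * (t ^ d * (x₀ : E) ^ v)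
        = t ^ c * ((x₀ : E) ^ u * t ^ d) * (x₀ : E) ^ v := by group
    _ = t ^ c * (t ^ d * (x₀ : E) ^ u) * (x₀ : E) ^ v := by rw [← ht' d ((x₀ : E) ^ u)]
    _ = t ^ c * t ^ d * ((x₀ : E) ^ u * (x₀ : E) ^ v) := by group
  apply Subtype.ext
  show (x : E) * (y : E) = (y : E) * (x : E)
  rw [hx, hy, swap, swap, add_comm b a, add_comm j i]
end

section
/- Let Γ be a subgroup of SL(2,ℝ) that is discrete and torsion-free, and let a and b be non-identity elements of Γ for which there exist non-zero integers n and m with aⁿ = bᵐ. Then the subgroup of SL(2,ℝ) generated by a and b is cyclic (and infinite). -/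
open Matrix

/-- `SL(2,ℝ)` is topologized as a subspace of the space of `2 × 2` real matrices. -/
instance : TopologicalSpace (Matrix.SpecialLinearGroup (Fin 2) ℝ) :=
  TopologicalSpace.induced (fun g => (g : Matrix (Fin 2) (Fin 2) ℝ)) inferInstance

lemma span_of_commute (C A : Matrix (Fin 2) (Fin 2) ℝ)
    (hC : ¬ (C 0 1 = 0 ∧ C 1 0 = 0 ∧ C 0 0 = C 1 1))
    (h : A * C = C * A) : ∃ x y : ℝ, A = x • (1 : Matrix (Fin 2) (Fin 2) ℝ) + y • C := by
  have e : ∀ i j, (A * C) i j = (C * A) i j := fun i j => by rw [h]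
  have e00 := e 0 0; have e01 := e 0 1; have e10 := e 1 0; have e11 := e 1 1
  simp only [Matrix.mul_apply, Fin.sum_univ_two] at e00 e01 e10 e11
  by_cases hq : C 0 1 ≠ 0
  · refine ⟨A 0 0 - (A 0 1 / C 0 1) * C 0 0, A 0 1 / C 0 1, ?_⟩
    ext i j
    fin_cases i <;> fin_cases j <;>
      simp [Matrix.one_apply] <;> field_simp <;> ring_nf <;> nlinarith [e00, e01, e10, e11, sq_nonneg (C 0 1)]
  · push_neg at hq
    by_cases hr : C 1 0 ≠ 0
    · refine ⟨A 0 0 - (A 1 0 / C 1 0) * C 0 0, A 1 0 / C 1 0, ?_⟩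
      ext i j
      fin_cases i <;> fin_cases j <;>
        simp [Matrix.one_apply] <;> field_simp <;> ring_nf <;> nlinarith [e00, e01, e10, e11]
    · push_neg at hr
      have hps : C 0 0 ≠ C 1 1 := fun hps => hC ⟨hq, hr, hps⟩
      have hps' : C 0 0 - C 1 1 ≠ 0 := sub_ne_zero.2 hps
      refine ⟨A 0 0 - ((A 0 0 - A 1 1) / (C 0 0 - C 1 1)) * C 0 0,
        (A 0 0 - A 1 1) / (C 0 0 - C 1 1), ?_⟩
      have hA01 : A 0 1 = 0 := by
        rw [hq] at e01
        have : A 0 1 * (C 1 1 - C 0 0) = 0 := by linarith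
        rcases mul_eq_zero.1 this with h' | h'
        · exact h'
        · exact absurd (by linarith) hps
      have hA10 : A 1 0 = 0 := by
        rw [hr] at e10
        have : A 1 0 * (C 0 0 - C 1 1) = 0 := by linarith
        rcases mul_eq_zero.1 this with h' | h'
        · exact h'
        · exact absurd (by linarith) hps
      ext i j
      fin_cases i <;> fin_cases j <;> simp [Matrix.one_apply, hA01, hA10, hq, hr] <;> field_simp <;> ring

lemma commute_of_commute_nonscalar (C A B : Matrix (Fin 2) (Fin 2) ℝ)
    (hC : ¬ (C 0 1 = 0 ∧ C 1 0 = 0 ∧ C 0 0 = C 1 1))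
    (hA : A * C = C * A) (hB : B * C = C * B) : A * B = B * A := by
  obtain ⟨x, y, rfl⟩ := span_of_commute C A hC hA
  obtain ⟨x', y', rfl⟩ := span_of_commute C B hC hB
  simp only [add_mul, mul_add, smul_mul_assoc, mul_smul_comm, one_mul, mul_one, smul_smul]
  simp only [smul_add, smul_smul]
  rw [mul_comm x' x, mul_comm x' y, mul_comm y' x, mul_comm y' y]
  abel

/-- If two non-trivial elements of a discrete torsion-free subgroup of `SL(2,ℝ)` have a
common non-trivial power, then they generate an infinite cyclic group. -/
theorem common_power_generate_cyclic
    (Γ : Subgroup (Matrix.SpecialLinearGroup (Fin 2) ℝ))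
    (hdisc : DiscreteTopology Γ)
    (htf : ∀ g : Γ, g ≠ 1 → ¬ IsOfFinOrder g)
    (a b : Matrix.SpecialLinearGroup (Fin 2) ℝ)
    (ha : a ∈ Γ) (hb : b ∈ Γ) (ha1 : a ≠ 1) (hb1 : b ≠ 1)
    (hpow : ∃ n m : ℤ, n ≠ 0 ∧ m ≠ 0 ∧ a ^ n = b ^ m) :
    IsCyclic (Subgroup.closure ({a, b} : Set (Matrix.SpecialLinearGroup (Fin 2) ℝ))) ∧
      Infinite (Subgroup.closure ({a, b} : Set (Matrix.SpecialLinearGroup (Fin 2) ℝ))) := by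
  obtain ⟨n, m, hn, hm, hnm⟩ := hpow
  -- torsion-freeness, restated
  have tfree : ∀ x : Matrix.SpecialLinearGroup (Fin 2) ℝ, x ∈ Γ → ∀ k : ℤ, k ≠ 0 →
      x ^ k = 1 → x = 1 := by
    intro x hx k hk hxk
    by_contra hx1
    refine htf ⟨x, hx⟩ (fun h => hx1 (by simpa [Subtype.ext_iff] using h)) ?_
    refine isOfFinOrder_iff_zpow_eq_one.2 ⟨k, hk, ?_⟩
    apply Subtype.ext
    simpa [SubgroupClass.coe_zpow] using hxk
  set c : Matrix.SpecialLinearGroup (Fin 2) ℝ := a ^ n with hc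
  have hcΓ : c ∈ Γ := Γ.zpow_mem ha n
  have hc1 : c ≠ 1 := fun h => ha1 (tfree a ha n hn h)
  -- c is not scalar
  have hns : ¬ ((c : Matrix (Fin 2) (Fin 2) ℝ) 0 1 = 0 ∧
      (c : Matrix (Fin 2) (Fin 2) ℝ) 1 0 = 0 ∧
      (c : Matrix (Fin 2) (Fin 2) ℝ) 0 0 = (c : Matrix (Fin 2) (Fin 2) ℝ) 1 1) := by
    rintro ⟨h1, h2, h3⟩
    set t : ℝ := (c : Matrix (Fin 2) (Fin 2) ℝ) 0 0 with ht
    have hcm : (c : Matrix (Fin 2) (Fin 2) ℝ) = t • 1 := by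
      ext i j
      fin_cases i <;> fin_cases j <;> simp [Matrix.one_apply, h1, h2, ← h3] <;> rfl
    have hdet : t ^ 2 = 1 := by
      have := c.prop
      rw [hcm] at this
      simpa [Matrix.det_smul, Matrix.det_one] using this
    have ht1 : t = 1 ∨ t = -1 := sq_eq_one_iff.1 hdet
    have hc2 : c ^ (2 : ℤ) = 1 := by
      apply Subtype.ext
      have : ((c ^ (2 : ℤ) : Matrix.SpecialLinearGroup (Fin 2) ℝ) : Matrix (Fin 2) (Fin 2) ℝ)
          = (c : Matrix (Fin 2) (Fin 2) ℝ) * (c : Matrix (Fin 2) (Fin 2) ℝ) := by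
        rw [show (2 : ℤ) = (2 : ℕ) from rfl, zpow_natCast]
        simp [pow_two]
      rw [Matrix.SpecialLinearGroup.coe_one, this, hcm]
      rcases ht1 with h | h <;> rw [h] <;> ext i j <;> fin_cases i <;> fin_cases j <;>
        simp [Matrix.one_apply]
    exact hc1 (tfree c hcΓ 2 (by norm_num) hc2)
  -- a and b commute
  have hab : Commute a b := by
    have hac : a * c = c * a := (Commute.refl a).zpow_right n
    have hbc : b * c = c * b := by
      rw [hnm]; exact (Commute.refl b).zpow_right m
    have hac' : (a : Matrix (Fin 2) (Fin 2) ℝ) * c = (c : Matrix (Fin 2) (Fin 2) ℝ) * a := by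
      rw [← Matrix.SpecialLinearGroup.coe_mul, ← Matrix.SpecialLinearGroup.coe_mul, hac]
    have hbc' : (b : Matrix (Fin 2) (Fin 2) ℝ) * c = (c : Matrix (Fin 2) (Fin 2) ℝ) * b := by
      rw [← Matrix.SpecialLinearGroup.coe_mul, ← Matrix.SpecialLinearGroup.coe_mul, hbc]
    have := commute_of_commute_nonscalar (c : Matrix (Fin 2) (Fin 2) ℝ) a b hns hac' hbc'
    apply Subtype.ext
    rw [Matrix.SpecialLinearGroup.coe_mul, Matrix.SpecialLinearGroup.coe_mul]
    exact this
  -- key cancellation lemma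
  have key : ∀ i j : ℤ, i * m + j * n = 0 → a ^ i * b ^ j = 1 := by
    intro i j hij
    have hcomm : Commute (a ^ i) (b ^ j) := hab.zpow_zpow i j
    have hpowm : (a ^ i * b ^ j) ^ m = 1 := by
      rw [hcomm.mul_zpow, ← _root_.zpow_mul, ← _root_.zpow_mul]
      have h1 : a ^ (i * m) = a ^ (n * (-j)) := by
        congr 1; linarith
      rw [h1, _root_.zpow_mul, ← hc, hnm, ← _root_.zpow_mul, ← _root_.zpow_add]
      have h2 : m * -j + j * m = 0 := by ring
      rw [h2, zpow_zero]
    exact tfree _ (Γ.mul_mem (Γ.zpow_mem ha i) (Γ.zpow_mem hb j)) m hm hpowm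
  have key2 : ∀ i j i' j' : ℤ, i * m + j * n = i' * m + j' * n →
      a ^ i * b ^ j = a ^ i' * b ^ j' := by
    intro i j i' j' h
    have h0 : (i - i') * m + (j - j') * n = 0 := by ring_nf; linarith
    have := key (i - i') (j - j') h0
    have e1 : a ^ i = a ^ i' * a ^ (i - i') := by
      rw [← _root_.zpow_add]; congr 1; ring
    have e2 : b ^ j = b ^ (j - j') * b ^ j' := by
      rw [← _root_.zpow_add]; congr 1; ring
    rw [e1, e2, mul_assoc, ← mul_assoc (a ^ (i - i')), this, one_mul]
  -- membership description of the closure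
  set H := Subgroup.closure ({a, b} : Set (Matrix.SpecialLinearGroup (Fin 2) ℝ)) with hH
  have haH : a ∈ H := Subgroup.subset_closure (Set.mem_insert _ _)
  have hbH : b ∈ H := Subgroup.subset_closure (Set.mem_insert_of_mem _ rfl)
  have mem_iff : ∀ x, x ∈ H → ∃ i j : ℤ, x = a ^ i * b ^ j := by
    intro x hx
    induction hx using Subgroup.closure_induction with
    | mem g hg =>
      rcases hg with hg | hg
      · exact ⟨1, 0, by simp [hg]⟩
      · exact ⟨0, 1, by simp [show g = b from hg]⟩
    | one => exact ⟨0, 0, by simp⟩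
    | mul g₁ g₂ _ _ ih₁ ih₂ =>
      obtain ⟨i₁, j₁, rfl⟩ := ih₁
      obtain ⟨i₂, j₂, rfl⟩ := ih₂
      refine ⟨i₁ + i₂, j₁ + j₂, ?_⟩
      rw [_root_.zpow_add, _root_.zpow_add]
      have hcm : Commute (b ^ j₁) (a ^ i₂) := (hab.zpow_zpow i₂ j₁).symm
      rw [mul_assoc, ← mul_assoc (b ^ j₁), hcm.eq]
      group
    | inv g _ ih =>
      obtain ⟨i, j, rfl⟩ := ih
      refine ⟨-i, -j, ?_⟩
      rw [_root_.mul_inv_rev, ← _root_.zpow_neg, ← _root_.zpow_neg]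
      exact ((hab.zpow_zpow (-i) (-j)).symm).eq
  constructor
  · -- cyclic
    set i₀ : ℤ := Int.gcdA m n
    set j₀ : ℤ := Int.gcdB m n
    set d : ℤ := (Int.gcd m n : ℤ) with hd
    have hbez : d = m * i₀ + n * j₀ := Int.gcd_eq_gcd_ab m n
    have hd0 : d ≠ 0 := by
      simp only [hd, ne_eq, Int.natCast_eq_zero, Int.gcd_eq_zero_iff, not_and_or]
      exact Or.inl hm
    set g : Matrix.SpecialLinearGroup (Fin 2) ℝ := a ^ i₀ * b ^ j₀ with hg
    have hgH : g ∈ H := H.mul_mem (H.zpow_mem haH i₀) (H.zpow_mem hbH j₀)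
    refine ⟨⟨⟨g, hgH⟩, ?_⟩⟩
    rintro ⟨x, hx⟩
    obtain ⟨i, j, rfl⟩ := mem_iff x hx
    have hdvd : d ∣ i * m + j * n :=
      Dvd.dvd.add (Dvd.dvd.mul_left (Int.gcd_dvd_left m n) i) (Dvd.dvd.mul_left (Int.gcd_dvd_right m n) j)
    obtain ⟨k, hk⟩ := hdvd
    refine ⟨k, ?_⟩
    apply Subtype.ext
    rw [SubgroupClass.coe_zpow]
    show g ^ k = a ^ i * b ^ j
    have hgk : g ^ k = a ^ (i₀ * k) * b ^ (j₀ * k) := by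
      rw [hg, (hab.zpow_zpow i₀ j₀).mul_zpow, ← _root_.zpow_mul, ← _root_.zpow_mul]
    rw [hgk]
    apply key2
    have : i₀ * k * m + j₀ * k * n = k * d := by rw [hbez]; ring
    rw [this, hk]; ring
  · -- infinite
    have hinj : Function.Injective (fun k : ℤ => (⟨a ^ k, H.zpow_mem haH k⟩ : H)) := by
      intro k l hkl
      by_contra hne
      have h1 : a ^ k = a ^ l := congrArg Subtype.val hkl
      have h2 : a ^ (k - l) = 1 := by
        rw [_root_.zpow_sub, h1, mul_inv_cancel]
      exact ha1 (tfree a ha (k - l) (sub_ne_zero.2 hne) h2)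
    exact Infinite.of_injective _ hinj
end
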